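/- Let D ≥ 2 and let W_1, …, W_D be mutually independent random variables taking values in finite sets, and let S be any random variable taking values in a finite set, all on a common probability space. Then for every d_1 ∈ {1,…,D}, the sum over d_2 = 1,…,D of the conditional mutual informations I(W_{d_2}; S | W_{d_1}) is at most H(S). -/

import Mathlib

set_option linter.unusedSectionVars false
set_option maxHeartbeats 1000000


open scoped BigOperators

namespace InfoTheory

/-- The distribution of a random variable `X` on a finite sample space with
probability mass function `P`. -/
noncomputable def dist {Ω A : Type*} [Fintype Ω] [DecidableEq A]
    (P : Ω → ℝ) (X : Ω → A) (a : A) : ℝ :=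
  ∑ ω, if X ω = a then P ω else 0

/-- Shannon entropy `H(X) = -Σ_x P(X=x) log P(X=x)` of a finite-valued random
variable on a finite sample space with probability mass function `P`. -/
noncomputable def entropy {Ω A : Type*} [Fintype Ω] [Fintype A] [DecidableEq A]
    (P : Ω → ℝ) (X : Ω → A) : ℝ :=
  -∑ a : A, dist P X a * Real.log (dist P X a)

/-- Mutual information `I(X;Y) = H(X) + H(Y) - H(X,Y)`. -/
noncomputable def mutInfo {Ω A B : Type*} [Fintype Ω] [Fintype A] [Fintype B]
    [DecidableEq A] [DecidableEq B] (P : Ω → ℝ) (X : Ω → A) (Y : Ω → B) : ℝ :=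
  entropy P X + entropy P Y - entropy P (fun ω => (X ω, Y ω))

/-- Conditional mutual information
`I(X;Y|Z) = H(X,Z) + H(Y,Z) - H(X,Y,Z) - H(Z)`. -/
noncomputable def condMutInfo {Ω A B C : Type*} [Fintype Ω] [Fintype A] [Fintype B]
    [Fintype C] [DecidableEq A] [DecidableEq B] [DecidableEq C]
    (P : Ω → ℝ) (X : Ω → A) (Y : Ω → B) (Z : Ω → C) : ℝ :=
  entropy P (fun ω => (X ω, Z ω)) + entropy P (fun ω => (Y ω, Z ω))
    - entropy P (fun ω => (X ω, Y ω, Z ω)) - entropy P Z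

end InfoTheory

section Aux
variable {Ω : Type*} [Fintype Ω] {A : Type*} [Fintype A] [DecidableEq A] (P : Ω → ℝ)

lemma aux_sum_dist_mul (X : Ω → A) (g : A → ℝ) :
    ∑ a : A, InfoTheory.dist P X a * g a = ∑ ω, P ω * g (X ω) := by
  unfold InfoTheory.dist
  simp only [Finset.sum_mul]
  rw [Finset.sum_comm]
  refine Finset.sum_congr rfl fun ω _ => ?_
  rw [Finset.sum_congr rfl (fun a _ => ite_mul (X ω = a) (P ω) 0 (g a))]
  simp [Finset.sum_ite_eq]

lemma aux_entropy_eq (X : Ω → A) :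
    InfoTheory.entropy P X = -∑ ω, P ω * Real.log (InfoTheory.dist P X (X ω)) := by
  rw [InfoTheory.entropy, aux_sum_dist_mul]

lemma aux_dist_nonneg (hP0 : ∀ ω, 0 ≤ P ω) (X : Ω → A) (a : A) :
    0 ≤ InfoTheory.dist P X a :=
  Finset.sum_nonneg fun ω _ => by by_cases h : X ω = a <;> simp [h, hP0 ω]

lemma aux_dist_sum (X : Ω → A) : ∑ a : A, InfoTheory.dist P X a = ∑ ω, P ω := by
  unfold InfoTheory.dist
  rw [Finset.sum_comm]
  exact Finset.sum_congr rfl fun ω _ => by simp [Finset.sum_ite_eq]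

lemma aux_le_dist (hP0 : ∀ ω, 0 ≤ P ω) (X : Ω → A) (ω : Ω) :
    P ω ≤ InfoTheory.dist P X (X ω) := by
  have := Finset.single_le_sum (f := fun ω' => if X ω' = X ω then P ω' else 0)
    (fun ω' _ => by by_cases h : X ω' = X ω <;> simp [h, hP0 ω']) (Finset.mem_univ ω)
  simpa [InfoTheory.dist] using this

lemma aux_dist_congr {B : Type*} [Fintype B] [DecidableEq B] {X : Ω → A} {Y : Ω → B}
    {a : A} {b : B} (h : ∀ ω, X ω = a ↔ Y ω = b) :
    InfoTheory.dist P X a = InfoTheory.dist P Y b :=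
  Finset.sum_congr rfl fun ω _ => if_congr (h ω) rfl rfl

lemma aux_fst_marg {B : Type*} [Fintype B] [DecidableEq B] (X : Ω → A) (Y : Ω → B) (a : A) :
    ∑ b : B, InfoTheory.dist P (fun ω => (X ω, Y ω)) (a, b) = InfoTheory.dist P X a := by
  unfold InfoTheory.dist
  rw [Finset.sum_comm]
  refine Finset.sum_congr rfl fun ω _ => ?_
  simp only [Prod.mk.injEq]
  by_cases h : X ω = a <;> simp [h, Finset.sum_ite_eq]

lemma aux_snd_marg {B : Type*} [Fintype B] [DecidableEq B] (X : Ω → A) (Y : Ω → B) (b : B) :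
    ∑ a : A, InfoTheory.dist P (fun ω => (X ω, Y ω)) (a, b) = InfoTheory.dist P Y b := by
  unfold InfoTheory.dist
  rw [Finset.sum_comm]
  refine Finset.sum_congr rfl fun ω _ => ?_
  simp only [Prod.mk.injEq]
  by_cases h : Y ω = b <;> simp [h, Finset.sum_ite_eq]

end Aux

section Aux2
variable {Ω : Type*} [Fintype Ω] (P : Ω → ℝ)

lemma aux_dist_comp {A C : Type*} [Fintype A] [DecidableEq A] [DecidableEq C]
    (X : Ω → A) (φ : A → C) (c : C) :
    InfoTheory.dist P (fun ω => φ (X ω)) c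
      = ∑ a : A, if φ a = c then InfoTheory.dist P X a else 0 := by
  have h1 : ∀ a : A, (if φ a = c then ∑ ω, (if X ω = a then P ω else 0) else 0)
      = ∑ ω, (if X ω = a then (if φ a = c then P ω else 0) else 0) := by
    intro a; by_cases h : φ a = c <;> simp [h]
  unfold InfoTheory.dist
  rw [Finset.sum_congr rfl fun a _ => h1 a, Finset.sum_comm]
  refine Finset.sum_congr rfl fun ω _ => ?_
  simp [Finset.sum_ite_eq]

end Aux2

section Aux3
open Finset
variable {Ω : Type*} [Fintype Ω] {D : ℕ} {A : Fin D → Type*}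
  [∀ i, Fintype (A i)] [∀ i, DecidableEq (A i)] (P : Ω → ℝ)

lemma aux_pair_indep (hP1 : ∑ ω, P ω = 1) (W : ∀ i, Ω → A i)
    (hindep : ∀ w : ∀ i, A i,
      InfoTheory.dist P (fun ω => fun i => W i ω) w = ∏ i, InfoTheory.dist P (W i) (w i))
    {j d1 : Fin D} (hj : j ≠ d1) (a : A j) (z : A d1) :
    InfoTheory.dist P (fun ω => (W j ω, W d1 ω)) (a, z)
      = InfoTheory.dist P (W j) a * InfoTheory.dist P (W d1) z := by
  classical
  have h1 := aux_dist_comp P (fun ω => fun i => W i ω) (fun w => (w j, w d1)) (a, z)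
  simp only [hindep] at h1
  rw [h1]
  set n : ∀ i, A i → ℝ := Function.update (Function.update
      (fun i (x : A i) => InfoTheory.dist P (W i) x)
      j (fun x => if x = a then InfoTheory.dist P (W j) x else 0))
      d1 (fun x => if x = z then InfoTheory.dist P (W d1) x else 0) with hn
  have hnd1 : n d1 = fun x => if x = z then InfoTheory.dist P (W d1) x else 0 :=
    Function.update_self _ _ _
  have hnj : n j = fun x => if x = a then InfoTheory.dist P (W j) x else 0 := by
    rw [hn, Function.update_of_ne hj, Function.update_self]
  have hno : ∀ i, i ≠ j → i ≠ d1 → n i = fun x => InfoTheory.dist P (W i) x := by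
    intro i hij hid1
    rw [hn, Function.update_of_ne hid1, Function.update_of_ne hij]
  have key : ∀ w : ∀ i, A i,
      (if (w j, w d1) = (a, z) then ∏ i, InfoTheory.dist P (W i) (w i) else 0)
        = ∏ i, n i (w i) := by
    intro w
    simp only [Prod.mk.injEq]
    by_cases hwj : w j = a
    · by_cases hwz : w d1 = z
      · rw [if_pos ⟨hwj, hwz⟩]
        rw [← Finset.mul_prod_erase univ (fun i => n i (w i)) (mem_univ d1),
            ← Finset.mul_prod_erase univ (fun i => InfoTheory.dist P (W i) (w i)) (mem_univ d1)]
        have hjmem : j ∈ univ.erase d1 := Finset.mem_erase.mpr ⟨hj, mem_univ j⟩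
        rw [← Finset.mul_prod_erase _ (fun i => n i (w i)) hjmem,
            ← Finset.mul_prod_erase _ (fun i => InfoTheory.dist P (W i) (w i)) hjmem]
        rw [hnd1, hnj]
        simp only [hwj, hwz, if_pos rfl]
        congr 2
        refine Finset.prod_congr rfl fun i hi => ?_
        have hi1 := (Finset.mem_erase.mp hi).1
        have hi2 := (Finset.mem_erase.mp (Finset.mem_erase.mp hi).2).1
        rw [hno i hi1 hi2]
      · rw [if_neg (by tauto)]
        refine (Finset.prod_eq_zero (mem_univ d1) ?_).symm
        rw [hnd1]; simp [hwz]
    · rw [if_neg (by tauto)]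
      refine (Finset.prod_eq_zero (mem_univ j) ?_).symm
      rw [hnj]; simp [hwj]
  rw [Finset.sum_congr rfl fun w _ => key w]
  rw [← Fintype.piFinset_univ, ← Finset.prod_univ_sum (fun _ => univ) n]
  rw [← Finset.mul_prod_erase univ _ (mem_univ d1)]
  have hjmem : j ∈ univ.erase d1 := Finset.mem_erase.mpr ⟨hj, mem_univ j⟩
  rw [← Finset.mul_prod_erase _ _ hjmem]
  have e1 : ∑ x, n d1 x = InfoTheory.dist P (W d1) z := by
    rw [hnd1]; simp [Finset.sum_ite_eq']
  have e2 : ∑ x, n j x = InfoTheory.dist P (W j) a := by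
    rw [hnj]; simp [Finset.sum_ite_eq']
  have e3 : ∏ i ∈ (univ.erase d1).erase j, (∑ x, n i x) = 1 := by
    refine Finset.prod_eq_one fun i hi => ?_
    have hi1 := (Finset.mem_erase.mp hi).1
    have hi2 := (Finset.mem_erase.mp (Finset.mem_erase.mp hi).2).1
    rw [hno i hi1 hi2, aux_dist_sum, hP1]
  rw [e1, e2, e3]
  ring

end Aux3

section Aux4
open Finset
variable {Ω : Type*} [Fintype Ω] {D : ℕ} {A : Fin D → Type*}
  [∀ i, Fintype (A i)] [∀ i, DecidableEq (A i)]
  {B : Type*} [Fintype B] [DecidableEq B] (P : Ω → ℝ)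

lemma aux_mul_div_le {p x y : ℝ} (hx : 0 ≤ x) (hy : 0 ≤ y) :
    p * (x / (p * y)) ≤ x / y := by
  rcases eq_or_ne p 0 with h | h
  · simp [h]; positivity
  · rw [← mul_div_assoc, mul_div_mul_left x y h]

lemma aux_ratio_le {x y v c : ℝ} (hx : 0 ≤ x) (hy : 0 ≤ y) (hv : 0 ≤ v) :
    (x * c) / ((y * c) * v) ≤ x / (y * v) := by
  rcases eq_or_ne c 0 with h | h
  · simp [h]; positivity
  · rw [mul_right_comm y c v, mul_div_mul_right _ _ h]

lemma aux_div_self_le_one {x : ℝ} : x / x ≤ 1 := by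
  rcases eq_or_ne x 0 with h | h
  · simp [h]
  · rw [div_self h]

lemma aux_key (hP0 : ∀ ω, 0 ≤ P ω) (hP1 : ∑ ω, P ω = 1) (W : ∀ i, Ω → A i)
    (S : Ω → B) (d1 : Fin D) (s : B) :
    ∑ w : ∀ i, A i, (∏ i, InfoTheory.dist P (W i) (w i)) *
      ∏ j ∈ univ.erase d1, InfoTheory.dist P (fun ω => (W j ω, S ω, W d1 ω)) (w j, s, w d1) /
        (InfoTheory.dist P (W j) (w j) * InfoTheory.dist P (fun ω => (S ω, W d1 ω)) (s, w d1))
      ≤ 1 := by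
  classical
  set h : (∀ i, A i) → A d1 → ℝ := fun w z =>
    (∏ i, InfoTheory.dist P (W i) (w i)) *
      ∏ j ∈ univ.erase d1, InfoTheory.dist P (fun ω => (W j ω, S ω, W d1 ω)) (w j, s, z) /
        (InfoTheory.dist P (W j) (w j) * InfoTheory.dist P (fun ω => (S ω, W d1 ω)) (s, z))
    with hh
  have step0 : ∀ w : ∀ i, A i, h w (w d1)
      = ∑ z : A d1, if w d1 = z then h w z else 0 := by
    intro w
    rw [Finset.sum_ite_eq univ (w d1) (h w)]
    simp
  calc ∑ w : ∀ i, A i, h w (w d1)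
      = ∑ w : ∀ i, A i, ∑ z : A d1, if w d1 = z then h w z else 0 :=
        Finset.sum_congr rfl fun w _ => step0 w
    _ = ∑ z : A d1, ∑ w : ∀ i, A i, if w d1 = z then h w z else 0 := Finset.sum_comm
    _ ≤ ∑ z : A d1, InfoTheory.dist P (W d1) z := by
        refine Finset.sum_le_sum fun z _ => ?_
        set m : ∀ i, A i → ℝ := Function.update
          (fun j (x : A j) => InfoTheory.dist P (W j) x *
            (InfoTheory.dist P (fun ω => (W j ω, S ω, W d1 ω)) (x, s, z) /
              (InfoTheory.dist P (W j) x * InfoTheory.dist P (fun ω => (S ω, W d1 ω)) (s, z))))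
          d1 (fun x => if x = z then InfoTheory.dist P (W d1) x else 0) with hm
        have hmd1 : m d1 = fun x => if x = z then InfoTheory.dist P (W d1) x else 0 :=
          Function.update_self _ _ _
        have hmo : ∀ j, j ≠ d1 → m j = fun x => InfoTheory.dist P (W j) x *
            (InfoTheory.dist P (fun ω => (W j ω, S ω, W d1 ω)) (x, s, z) /
              (InfoTheory.dist P (W j) x * InfoTheory.dist P (fun ω => (S ω, W d1 ω)) (s, z))) :=
          fun j hj => Function.update_of_ne hj _ _
        have key2 : ∀ w : ∀ i, A i,
            (if w d1 = z then h w z else 0) = ∏ i, m i (w i) := by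
          intro w
          by_cases hw : w d1 = z
          · rw [if_pos hw, hh]
            dsimp only
            rw [← Finset.mul_prod_erase univ (fun i => m i (w i)) (mem_univ d1),
                ← Finset.mul_prod_erase univ
                  (fun i => InfoTheory.dist P (W i) (w i)) (mem_univ d1)]
            have : ∏ i ∈ univ.erase d1, m i (w i)
                = ∏ i ∈ univ.erase d1, InfoTheory.dist P (W i) (w i) *
                  (InfoTheory.dist P (fun ω => (W i ω, S ω, W d1 ω)) (w i, s, z) /
                    (InfoTheory.dist P (W i) (w i) *
                      InfoTheory.dist P (fun ω => (S ω, W d1 ω)) (s, z))) := by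
              refine Finset.prod_congr rfl fun i hi => ?_
              rw [hmo i (Finset.mem_erase.mp hi).1]
            have e : m d1 (w d1) = InfoTheory.dist P (W d1) (w d1) := by
              rw [hmd1]; simp [hw]
            rw [this, e, Finset.prod_mul_distrib, hw]
            ring
          · rw [if_neg hw]
            refine (Finset.prod_eq_zero (mem_univ d1) ?_).symm
            rw [hmd1]; simp [hw]
        rw [Finset.sum_congr rfl fun w _ => key2 w]
        rw [← Fintype.piFinset_univ, ← Finset.prod_univ_sum (fun _ => univ) m]
        rw [← Finset.mul_prod_erase univ _ (mem_univ d1)]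
        have e1 : ∑ x, m d1 x = InfoTheory.dist P (W d1) z := by
          rw [hmd1]; simp [Finset.sum_ite_eq']
        rw [e1]
        have hfac : ∀ j ∈ univ.erase d1, (0 : ℝ) ≤ ∑ x, m j x ∧ ∑ x, m j x ≤ 1 := by
          intro j hj
          have hj1 := (Finset.mem_erase.mp hj).1
          rw [hmo j hj1]
          constructor
          · refine Finset.sum_nonneg fun x _ => ?_
            have := aux_dist_nonneg P hP0 (W j) x
            have h2 := aux_dist_nonneg P hP0 (fun ω => (W j ω, S ω, W d1 ω)) (x, s, z)
            have h3 := aux_dist_nonneg P hP0 (fun ω => (S ω, W d1 ω)) (s, z)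
            positivity
          · calc ∑ x, InfoTheory.dist P (W j) x *
                  (InfoTheory.dist P (fun ω => (W j ω, S ω, W d1 ω)) (x, s, z) /
                    (InfoTheory.dist P (W j) x *
                      InfoTheory.dist P (fun ω => (S ω, W d1 ω)) (s, z)))
                ≤ ∑ x, InfoTheory.dist P (fun ω => (W j ω, S ω, W d1 ω)) (x, s, z) /
                    InfoTheory.dist P (fun ω => (S ω, W d1 ω)) (s, z) := by
                  refine Finset.sum_le_sum fun x _ => ?_
                  exact aux_mul_div_le
                    (aux_dist_nonneg P hP0 (fun ω => (W j ω, S ω, W d1 ω)) (x, s, z))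
                    (aux_dist_nonneg P hP0 (fun ω => (S ω, W d1 ω)) (s, z))
              _ = (∑ x, InfoTheory.dist P (fun ω => (W j ω, S ω, W d1 ω)) (x, s, z)) /
                    InfoTheory.dist P (fun ω => (S ω, W d1 ω)) (s, z) := by
                  rw [Finset.sum_div]
              _ ≤ 1 := by
                  rw [aux_snd_marg P (W j) (fun ω => (S ω, W d1 ω)) (s, z)]
                  exact aux_div_self_le_one
        have hprodle : ∏ j ∈ univ.erase d1, (∑ x, m j x) ≤ 1 :=
          Finset.prod_le_one (fun j hj => (hfac j hj).1) (fun j hj => (hfac j hj).2)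
        have := aux_dist_nonneg P hP0 (W d1) z
        calc InfoTheory.dist P (W d1) z * ∏ j ∈ univ.erase d1, (∑ x, m j x)
            ≤ InfoTheory.dist P (W d1) z * 1 := by
              exact mul_le_mul_of_nonneg_left hprodle this
          _ = InfoTheory.dist P (W d1) z := mul_one _
    _ = 1 := by rw [aux_dist_sum, hP1]

end Aux4

section Main
open Finset Real

noncomputable def auxF {Ω : Type*} [Fintype Ω] {D : ℕ} {A : Fin D → Type*}
    [∀ i, Fintype (A i)] [∀ i, DecidableEq (A i)] {B : Type*} [Fintype B] [DecidableEq B]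
    (P : Ω → ℝ) (W : ∀ i, Ω → A i) (S : Ω → B) (d1 : Fin D)
    (t : (∀ i, A i) × B) : ℝ :=
  InfoTheory.dist P S t.2 * ∏ d2,
    (InfoTheory.dist P (fun ω => (W d2 ω, S ω, W d1 ω)) (t.1 d2, t.2, t.1 d1) *
      InfoTheory.dist P (W d1) (t.1 d1)) /
    (InfoTheory.dist P (fun ω => (W d2 ω, W d1 ω)) (t.1 d2, t.1 d1) *
      InfoTheory.dist P (fun ω => (S ω, W d1 ω)) (t.2, t.1 d1))

variable {Ω : Type*} [Fintype Ω] {D : ℕ} {A : Fin D → Type*}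
  [∀ i, Fintype (A i)] [∀ i, DecidableEq (A i)]
  {B : Type*} [Fintype B] [DecidableEq B]

lemma auxF_nonneg (P : Ω → ℝ) (hP0 : ∀ ω, 0 ≤ P ω) (W : ∀ i, Ω → A i) (S : Ω → B)
    (d1 : Fin D) (t : (∀ i, A i) × B) : 0 ≤ auxF P W S d1 t := by
  unfold auxF
  refine mul_nonneg (aux_dist_nonneg P hP0 S t.2) (Finset.prod_nonneg fun d2 _ => ?_)
  exact div_nonneg
    (mul_nonneg (aux_dist_nonneg P hP0 _ _) (aux_dist_nonneg P hP0 _ _))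
    (mul_nonneg (aux_dist_nonneg P hP0 _ _) (aux_dist_nonneg P hP0 _ _))

lemma auxF_le (P : Ω → ℝ) (hP0 : ∀ ω, 0 ≤ P ω) (hP1 : ∑ ω, P ω = 1)
    (W : ∀ i, Ω → A i) (S : Ω → B)
    (hindep : ∀ w : ∀ i, A i,
      InfoTheory.dist P (fun ω => fun i => W i ω) w = ∏ i, InfoTheory.dist P (W i) (w i))
    (d1 : Fin D) (w : ∀ i, A i) (s : B) :
    auxF P W S d1 (w, s) ≤ InfoTheory.dist P S s *
      ∏ j ∈ univ.erase d1, InfoTheory.dist P (fun ω => (W j ω, S ω, W d1 ω)) (w j, s, w d1) /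
        (InfoTheory.dist P (W j) (w j) *
          InfoTheory.dist P (fun ω => (S ω, W d1 ω)) (s, w d1)) := by
  unfold auxF
  dsimp only
  rw [← Finset.mul_prod_erase univ _ (mem_univ d1)]
  have hr0 : ∀ d2 : Fin D,
      0 ≤ (InfoTheory.dist P (fun ω => (W d2 ω, S ω, W d1 ω)) (w d2, s, w d1) *
        InfoTheory.dist P (W d1) (w d1)) /
      (InfoTheory.dist P (fun ω => (W d2 ω, W d1 ω)) (w d2, w d1) *
        InfoTheory.dist P (fun ω => (S ω, W d1 ω)) (s, w d1)) := fun d2 =>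
    div_nonneg
      (mul_nonneg (aux_dist_nonneg P hP0 _ _) (aux_dist_nonneg P hP0 _ _))
      (mul_nonneg (aux_dist_nonneg P hP0 _ _) (aux_dist_nonneg P hP0 _ _))
  have hrd1 : (InfoTheory.dist P (fun ω => (W d1 ω, S ω, W d1 ω)) (w d1, s, w d1) *
        InfoTheory.dist P (W d1) (w d1)) /
      (InfoTheory.dist P (fun ω => (W d1 ω, W d1 ω)) (w d1, w d1) *
        InfoTheory.dist P (fun ω => (S ω, W d1 ω)) (s, w d1)) ≤ 1 := by
    have e1 : InfoTheory.dist P (fun ω => (W d1 ω, S ω, W d1 ω)) (w d1, s, w d1)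
        = InfoTheory.dist P (fun ω => (S ω, W d1 ω)) (s, w d1) := by
      refine aux_dist_congr P fun ω => ?_
      simp only [Prod.mk.injEq]; tauto
    have e2 : InfoTheory.dist P (fun ω => (W d1 ω, W d1 ω)) (w d1, w d1)
        = InfoTheory.dist P (W d1) (w d1) := by
      refine aux_dist_congr P fun ω => ?_
      simp only [Prod.mk.injEq]; tauto
    rw [e1, e2, mul_comm]
    exact aux_div_self_le_one
  have herase : ∏ j ∈ univ.erase d1,
      (InfoTheory.dist P (fun ω => (W j ω, S ω, W d1 ω)) (w j, s, w d1) *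
        InfoTheory.dist P (W d1) (w d1)) /
      (InfoTheory.dist P (fun ω => (W j ω, W d1 ω)) (w j, w d1) *
        InfoTheory.dist P (fun ω => (S ω, W d1 ω)) (s, w d1))
      ≤ ∏ j ∈ univ.erase d1,
        InfoTheory.dist P (fun ω => (W j ω, S ω, W d1 ω)) (w j, s, w d1) /
        (InfoTheory.dist P (W j) (w j) *
          InfoTheory.dist P (fun ω => (S ω, W d1 ω)) (s, w d1)) := by
    refine Finset.prod_le_prod (fun j _ => hr0 j) fun j hj => ?_
    have hjne := (Finset.mem_erase.mp hj).1
    rw [aux_pair_indep P hP1 W hindep hjne (w j) (w d1)]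
    exact aux_ratio_le (aux_dist_nonneg P hP0 _ _) (aux_dist_nonneg P hP0 _ _)
      (aux_dist_nonneg P hP0 _ _)
  have hK0 : (0:ℝ) ≤ ∏ j ∈ univ.erase d1,
      InfoTheory.dist P (fun ω => (W j ω, S ω, W d1 ω)) (w j, s, w d1) /
      (InfoTheory.dist P (W j) (w j) *
        InfoTheory.dist P (fun ω => (S ω, W d1 ω)) (s, w d1)) :=
    Finset.prod_nonneg fun j _ => div_nonneg (aux_dist_nonneg P hP0 _ _)
      (mul_nonneg (aux_dist_nonneg P hP0 _ _) (aux_dist_nonneg P hP0 _ _))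
  refine mul_le_mul_of_nonneg_left ?_ (aux_dist_nonneg P hP0 S s)
  calc _ ≤ 1 * ∏ j ∈ univ.erase d1,
        InfoTheory.dist P (fun ω => (W j ω, S ω, W d1 ω)) (w j, s, w d1) /
        (InfoTheory.dist P (W j) (w j) *
          InfoTheory.dist P (fun ω => (S ω, W d1 ω)) (s, w d1)) := by
        exact mul_le_mul hrd1 herase (Finset.prod_nonneg fun j _ => hr0 j) zero_le_one
    _ = _ := one_mul _

end Main

section Main2
open Finset Real
variable {Ω : Type*} [Fintype Ω] {D : ℕ} {A : Fin D → Type*}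
  [∀ i, Fintype (A i)] [∀ i, DecidableEq (A i)]
  {B : Type*} [Fintype B] [DecidableEq B]

lemma aux_sumF_le_one (P : Ω → ℝ) (hP0 : ∀ ω, 0 ≤ P ω) (hP1 : ∑ ω, P ω = 1)
    (W : ∀ i, Ω → A i) (S : Ω → B)
    (hindep : ∀ w : ∀ i, A i,
      InfoTheory.dist P (fun ω => fun i => W i ω) w = ∏ i, InfoTheory.dist P (W i) (w i))
    (d1 : Fin D) :
    ∑ ω, P ω * auxF P W S d1 (fun i => W i ω, S ω) ≤ 1 := by
  classical
  rw [← aux_sum_dist_mul P (fun ω => (fun i => W i ω, S ω)) (auxF P W S d1)]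
  rw [Fintype.sum_prod_type]
  have hQle : ∀ (w : ∀ i, A i) (s : B),
      InfoTheory.dist P (fun ω => (fun i => W i ω, S ω)) (w, s)
        ≤ ∏ i, InfoTheory.dist P (W i) (w i) := by
    intro w s
    calc InfoTheory.dist P (fun ω => (fun i => W i ω, S ω)) (w, s)
        ≤ ∑ s' : B, InfoTheory.dist P (fun ω => (fun i => W i ω, S ω)) (w, s') :=
          Finset.single_le_sum (fun s' _ => aux_dist_nonneg P hP0 _ _) (mem_univ s)
      _ = ∏ i, InfoTheory.dist P (W i) (w i) :=
          (aux_fst_marg P (fun ω => fun i => W i ω) S w).trans (hindep w)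
  calc ∑ w : ∀ i, A i, ∑ s : B,
        InfoTheory.dist P (fun ω => (fun i => W i ω, S ω)) (w, s) * auxF P W S d1 (w, s)
      ≤ ∑ w : ∀ i, A i, ∑ s : B, (∏ i, InfoTheory.dist P (W i) (w i)) * auxF P W S d1 (w, s) := by
        refine Finset.sum_le_sum fun w _ => Finset.sum_le_sum fun s _ => ?_
        exact mul_le_mul_of_nonneg_right (hQle w s) (auxF_nonneg P hP0 W S d1 (w, s))
    _ ≤ ∑ w : ∀ i, A i, ∑ s : B, (∏ i, InfoTheory.dist P (W i) (w i)) *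
          (InfoTheory.dist P S s * ∏ j ∈ univ.erase d1,
            InfoTheory.dist P (fun ω => (W j ω, S ω, W d1 ω)) (w j, s, w d1) /
            (InfoTheory.dist P (W j) (w j) *
              InfoTheory.dist P (fun ω => (S ω, W d1 ω)) (s, w d1))) := by
        refine Finset.sum_le_sum fun w _ => Finset.sum_le_sum fun s _ => ?_
        exact mul_le_mul_of_nonneg_left (auxF_le P hP0 hP1 W S hindep d1 w s)
          (Finset.prod_nonneg fun i _ => aux_dist_nonneg P hP0 _ _)
    _ = ∑ s : B, ∑ w : ∀ i, A i, (∏ i, InfoTheory.dist P (W i) (w i)) *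
          (InfoTheory.dist P S s * ∏ j ∈ univ.erase d1,
            InfoTheory.dist P (fun ω => (W j ω, S ω, W d1 ω)) (w j, s, w d1) /
            (InfoTheory.dist P (W j) (w j) *
              InfoTheory.dist P (fun ω => (S ω, W d1 ω)) (s, w d1))) := Finset.sum_comm
    _ = ∑ s : B, InfoTheory.dist P S s * ∑ w : ∀ i, A i,
          (∏ i, InfoTheory.dist P (W i) (w i)) * ∏ j ∈ univ.erase d1,
            InfoTheory.dist P (fun ω => (W j ω, S ω, W d1 ω)) (w j, s, w d1) /
            (InfoTheory.dist P (W j) (w j) *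
              InfoTheory.dist P (fun ω => (S ω, W d1 ω)) (s, w d1)) := by
        refine Finset.sum_congr rfl fun s _ => ?_
        rw [Finset.mul_sum]
        exact Finset.sum_congr rfl fun w _ => by ring
    _ ≤ ∑ s : B, InfoTheory.dist P S s * 1 := by
        refine Finset.sum_le_sum fun s _ => ?_
        exact mul_le_mul_of_nonneg_left (aux_key P hP0 hP1 W S d1 s)
          (aux_dist_nonneg P hP0 S s)
    _ = 1 := by
        simp only [mul_one]
        rw [aux_dist_sum, hP1]

end Main2


open InfoTheory in
/-- Let `D ≥ 2` and let `W₁, …, W_D` be mutually independent finite-valued random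
variables and `S` any finite-valued random variable on a common finite probability
space.  Then for every `d₁`, `Σ_{d₂=1}^{D} I(W_{d₂}; S | W_{d₁}) ≤ H(S)`. -/
theorem sum_condMutInfo_le_entropy {Ω : Type*} [Fintype Ω] {D : ℕ} (hD : 2 ≤ D)
    {A : Fin D → Type*} [∀ i, Fintype (A i)] [∀ i, DecidableEq (A i)]
    {B : Type*} [Fintype B] [DecidableEq B]
    (P : Ω → ℝ) (hP0 : ∀ ω, 0 ≤ P ω) (hP1 : ∑ ω, P ω = 1)
    (W : ∀ i, Ω → A i) (S : Ω → B)
    (hindep : ∀ w : ∀ i, A i,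
      dist P (fun ω => fun i => W i ω) w = ∏ i, dist P (W i) (w i))
    (d1 : Fin D) :
    ∑ d2 : Fin D, condMutInfo P (W d2) S (W d1) ≤ entropy P S := by
  classical
  have hcmi : ∀ d2 : Fin D, condMutInfo P (W d2) S (W d1) = ∑ ω, P ω *
      (Real.log (InfoTheory.dist P (fun ω' => (W d2 ω', S ω', W d1 ω')) (W d2 ω, S ω, W d1 ω))
        + Real.log (InfoTheory.dist P (W d1) (W d1 ω))
        - (Real.log (InfoTheory.dist P (fun ω' => (W d2 ω', W d1 ω')) (W d2 ω, W d1 ω))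
          + Real.log (InfoTheory.dist P (fun ω' => (S ω', W d1 ω')) (S ω, W d1 ω)))) := by
    intro d2
    unfold InfoTheory.condMutInfo
    simp only [aux_entropy_eq]
    have h : ∀ ω : Ω, P ω *
        (Real.log (InfoTheory.dist P (fun ω' => (W d2 ω', S ω', W d1 ω')) (W d2 ω, S ω, W d1 ω))
          + Real.log (InfoTheory.dist P (W d1) (W d1 ω))
          - (Real.log (InfoTheory.dist P (fun ω' => (W d2 ω', W d1 ω')) (W d2 ω, W d1 ω))
            + Real.log (InfoTheory.dist P (fun ω' => (S ω', W d1 ω')) (S ω, W d1 ω))))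
        = P ω * Real.log (InfoTheory.dist P (fun ω' => (W d2 ω', S ω', W d1 ω')) (W d2 ω, S ω, W d1 ω))
          + P ω * Real.log (InfoTheory.dist P (W d1) (W d1 ω))
          - (P ω * Real.log (InfoTheory.dist P (fun ω' => (W d2 ω', W d1 ω')) (W d2 ω, W d1 ω))
            + P ω * Real.log (InfoTheory.dist P (fun ω' => (S ω', W d1 ω')) (S ω, W d1 ω))) :=
      fun ω => by ring
    rw [Finset.sum_congr rfl fun ω _ => h ω, Finset.sum_sub_distrib,
      Finset.sum_add_distrib, Finset.sum_add_distrib]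
    ring
  have hB : ∑ d2 : Fin D, condMutInfo P (W d2) S (W d1) - entropy P S
      = ∑ ω, P ω * ((∑ d2 : Fin D,
        (Real.log (InfoTheory.dist P (fun ω' => (W d2 ω', S ω', W d1 ω')) (W d2 ω, S ω, W d1 ω))
          + Real.log (InfoTheory.dist P (W d1) (W d1 ω))
          - (Real.log (InfoTheory.dist P (fun ω' => (W d2 ω', W d1 ω')) (W d2 ω, W d1 ω))
            + Real.log (InfoTheory.dist P (fun ω' => (S ω', W d1 ω')) (S ω, W d1 ω)))))
        + Real.log (InfoTheory.dist P S (S ω))) := by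
    rw [Finset.sum_congr rfl fun d2 _ => hcmi d2, Finset.sum_comm, aux_entropy_eq P S,
      sub_neg_eq_add, ← Finset.sum_add_distrib]
    refine Finset.sum_congr rfl fun ω _ => ?_
    rw [← Finset.mul_sum, ← mul_add]
  have hpt : ∀ ω : Ω, P ω * ((∑ d2 : Fin D,
        (Real.log (InfoTheory.dist P (fun ω' => (W d2 ω', S ω', W d1 ω')) (W d2 ω, S ω, W d1 ω))
          + Real.log (InfoTheory.dist P (W d1) (W d1 ω))
          - (Real.log (InfoTheory.dist P (fun ω' => (W d2 ω', W d1 ω')) (W d2 ω, W d1 ω))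
            + Real.log (InfoTheory.dist P (fun ω' => (S ω', W d1 ω')) (S ω, W d1 ω)))))
        + Real.log (InfoTheory.dist P S (S ω)))
      ≤ P ω * auxF P W S d1 (fun i => W i ω, S ω) - P ω := by
    intro ω
    rcases eq_or_lt_of_le (hP0 ω) with h0 | hpos
    · rw [← h0]; simp
    · have hFT : auxF P W S d1 (fun i => W i ω, S ω) = InfoTheory.dist P S (S ω) *
          ∏ d2 : Fin D,
            (InfoTheory.dist P (fun ω' => (W d2 ω', S ω', W d1 ω')) (W d2 ω, S ω, W d1 ω) *
              InfoTheory.dist P (W d1) (W d1 ω)) /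
            (InfoTheory.dist P (fun ω' => (W d2 ω', W d1 ω')) (W d2 ω, W d1 ω) *
              InfoTheory.dist P (fun ω' => (S ω', W d1 ω')) (S ω, W d1 ω)) := rfl
      have l3 : ∀ d2 : Fin D,
          0 < InfoTheory.dist P (fun ω' => (W d2 ω', S ω', W d1 ω')) (W d2 ω, S ω, W d1 ω) :=
        fun d2 => lt_of_lt_of_le hpos (aux_le_dist P hP0 (fun ω' => (W d2 ω', S ω', W d1 ω')) ω)
      have l2 : ∀ d2 : Fin D,
          0 < InfoTheory.dist P (fun ω' => (W d2 ω', W d1 ω')) (W d2 ω, W d1 ω) :=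
        fun d2 => lt_of_lt_of_le hpos (aux_le_dist P hP0 (fun ω' => (W d2 ω', W d1 ω')) ω)
      have lZ : 0 < InfoTheory.dist P (W d1) (W d1 ω) :=
        lt_of_lt_of_le hpos (aux_le_dist P hP0 (W d1) ω)
      have lSZ : 0 < InfoTheory.dist P (fun ω' => (S ω', W d1 ω')) (S ω, W d1 ω) :=
        lt_of_lt_of_le hpos (aux_le_dist P hP0 (fun ω' => (S ω', W d1 ω')) ω)
      have lS : 0 < InfoTheory.dist P S (S ω) :=
        lt_of_lt_of_le hpos (aux_le_dist P hP0 S ω)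
      have hr : ∀ d2 : Fin D, 0 <
          (InfoTheory.dist P (fun ω' => (W d2 ω', S ω', W d1 ω')) (W d2 ω, S ω, W d1 ω) *
            InfoTheory.dist P (W d1) (W d1 ω)) /
          (InfoTheory.dist P (fun ω' => (W d2 ω', W d1 ω')) (W d2 ω, W d1 ω) *
            InfoTheory.dist P (fun ω' => (S ω', W d1 ω')) (S ω, W d1 ω)) :=
        fun d2 => div_pos (mul_pos (l3 d2) lZ) (mul_pos (l2 d2) lSZ)
      have hprodpos : 0 < ∏ d2 : Fin D,
          (InfoTheory.dist P (fun ω' => (W d2 ω', S ω', W d1 ω')) (W d2 ω, S ω, W d1 ω) *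
            InfoTheory.dist P (W d1) (W d1 ω)) /
          (InfoTheory.dist P (fun ω' => (W d2 ω', W d1 ω')) (W d2 ω, W d1 ω) *
            InfoTheory.dist P (fun ω' => (S ω', W d1 ω')) (S ω, W d1 ω)) :=
        Finset.prod_pos fun d2 _ => hr d2
      have hFpos : 0 < auxF P W S d1 (fun i => W i ω, S ω) := by
        rw [hFT]; exact mul_pos lS hprodpos
      have hlog : Real.log (auxF P W S d1 (fun i => W i ω, S ω)) = (∑ d2 : Fin D,
          (Real.log (InfoTheory.dist P (fun ω' => (W d2 ω', S ω', W d1 ω')) (W d2 ω, S ω, W d1 ω))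
            + Real.log (InfoTheory.dist P (W d1) (W d1 ω))
            - (Real.log (InfoTheory.dist P (fun ω' => (W d2 ω', W d1 ω')) (W d2 ω, W d1 ω))
              + Real.log (InfoTheory.dist P (fun ω' => (S ω', W d1 ω')) (S ω, W d1 ω)))))
          + Real.log (InfoTheory.dist P S (S ω)) := by
        rw [hFT, Real.log_mul (ne_of_gt lS) (ne_of_gt hprodpos),
          Real.log_prod (fun d2 _ => ne_of_gt (hr d2)), add_comm]
        congr 1
        refine Finset.sum_congr rfl fun d2 _ => ?_
        rw [Real.log_div (ne_of_gt (mul_pos (l3 d2) lZ)) (ne_of_gt (mul_pos (l2 d2) lSZ)),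
          Real.log_mul (ne_of_gt (l3 d2)) (ne_of_gt lZ),
          Real.log_mul (ne_of_gt (l2 d2)) (ne_of_gt lSZ)]
      calc P ω * _ = P ω * Real.log (auxF P W S d1 (fun i => W i ω, S ω)) := by rw [hlog]
        _ ≤ P ω * (auxF P W S d1 (fun i => W i ω, S ω) - 1) :=
            mul_le_mul_of_nonneg_left (Real.log_le_sub_one_of_pos hFpos) (le_of_lt hpos)
        _ = P ω * auxF P W S d1 (fun i => W i ω, S ω) - P ω := by ring
  have hsum := aux_sumF_le_one P hP0 hP1 W S hindep d1
  have h1 : ∑ d2 : Fin D, condMutInfo P (W d2) S (W d1) - entropy P S ≤ 0 := by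
    rw [hB]
    calc _ ≤ ∑ ω, (P ω * auxF P W S d1 (fun i => W i ω, S ω) - P ω) :=
          Finset.sum_le_sum fun ω _ => hpt ω
      _ = (∑ ω, P ω * auxF P W S d1 (fun i => W i ω, S ω)) - 1 := by
          rw [Finset.sum_sub_distrib, hP1]
      _ ≤ 0 := by linarith
  linarith
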